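/- arXiv:1909.07112 — 2 statements merged into one kernel-verified Lean document; each statement's English description precedes it below -/
import Mathlib

section
/- For every complex q with |q| < 1, the infinite product g(q) = ∏_{j=1}^{∞} (1 + q^j)(1 - q^{2j-1}) equals 1. -/
open Filter

/-- Auxiliary: factors are nonzero and logs are summable. -/
lemma aux_basic (q : ℂ) (hq : ‖q‖ < 1) (f : ℕ → ℂ)
    (h : ∀ n, ‖f n‖ ≤ (‖q‖) ^ (n + 1)) :
    (∀ n, 1 + f n ≠ 0) ∧ Summable (fun n => Complex.log (1 + f n)) := by
  have hlt : ∀ n, ‖f n‖ < 1 := fun n =>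
    lt_of_le_of_lt (h n) (pow_lt_one₀ (norm_nonneg q) hq (Nat.succ_ne_zero n))
  constructor
  · intro n hn
    have h1 : f n = -1 := by linear_combination hn
    have := hlt n
    rw [h1] at this
    norm_num at this
  · have hg : Summable (fun n : ℕ => (3 / 2 : ℝ) * (‖q‖) ^ (n + 1)) := by
      have : Summable (fun n : ℕ => (‖q‖) ^ n) :=
        summable_geometric_of_lt_one (norm_nonneg q) hq
      simpa [pow_succ, mul_comm, mul_assoc, mul_left_comm] using
        (this.mul_left ((3 / 2 : ℝ) * ‖q‖))
    apply Summable.of_norm_bounded_eventually_nat hg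
    have htend : Tendsto (fun n : ℕ => (‖q‖) ^ (n + 1)) atTop (nhds 0) := by
      have := tendsto_pow_atTop_nhds_zero_of_lt_one (norm_nonneg q) hq
      exact this.comp (tendsto_add_atTop_nat 1)
    have hev : ∀ᶠ n in atTop, (‖q‖) ^ (n + 1) ≤ 1 / 2 :=
      htend.eventually_le_const (by norm_num)
    filter_upwards [hev] with n hn
    calc ‖Complex.log (1 + f n)‖ ≤ (3 / 2) * ‖f n‖ :=
          Complex.norm_log_one_add_half_le_self (le_trans (h n) hn)
      _ ≤ (3 / 2) * (‖q‖) ^ (n + 1) := by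
          have := h n; nlinarith [norm_nonneg (f n)]

lemma aux_mult (q : ℂ) (hq : ‖q‖ < 1) (f : ℕ → ℂ)
    (h : ∀ n, ‖f n‖ ≤ (‖q‖) ^ (n + 1)) :
    Multipliable (fun n => 1 + f n) := by
  obtain ⟨h0, h1⟩ := aux_basic q hq f h
  exact Complex.multipliable_of_summable_log h1

lemma aux_ne_zero (q : ℂ) (hq : ‖q‖ < 1) (f : ℕ → ℂ)
    (h : ∀ n, ‖f n‖ ≤ (‖q‖) ^ (n + 1)) :
    (∏' n, (1 + f n)) ≠ 0 := by
  obtain ⟨h0, h1⟩ := aux_basic q hq f h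
  have := Complex.cexp_tsum_eq_tprod h0 h1
  rw [← this]
  exact Complex.exp_ne_zero _

/-- For `|q| < 1`, the infinite product `∏_{j=1}^∞ (1 + q^j)(1 - q^{2j-1})` equals `1`. -/
theorem tprod_one_add_mul_one_sub_eq_one (q : ℂ) (hq : ‖q‖ < 1) :
    (∏' j : ℕ, (1 + q ^ (j + 1)) * (1 - q ^ (2 * (j + 1) - 1))) = 1 := by
  have hq0 : 0 ≤ ‖q‖ := norm_nonneg q
  have hq1 : ‖q‖ ≤ 1 := hq.le
  have hbA : ∀ n : ℕ, ‖q ^ (n + 1)‖ ≤ (‖q‖) ^ (n + 1) := by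
    intro n; simp [norm_pow]
  have hbB : ∀ n : ℕ, ‖-q ^ (2 * n + 1)‖ ≤ (‖q‖) ^ (n + 1) := by
    intro n
    rw [norm_neg, norm_pow]
    exact pow_le_pow_of_le_one hq0 hq1 (by omega)
  have hbC : ∀ n : ℕ, ‖-q ^ (2 * n + 2)‖ ≤ (‖q‖) ^ (n + 1) := by
    intro n
    rw [norm_neg, norm_pow]
    exact pow_le_pow_of_le_one hq0 hq1 (by omega)
  have hbD : ∀ n : ℕ, ‖-q ^ (n + 1)‖ ≤ (‖q‖) ^ (n + 1) := by
    intro n; rw [norm_neg]; exact hbA n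
  -- multipliability of all four products
  have hA : Multipliable (fun n : ℕ => 1 + q ^ (n + 1)) := aux_mult q hq _ hbA
  have hB : Multipliable (fun n : ℕ => 1 - q ^ (2 * n + 1)) := by
    simpa [sub_eq_add_neg] using aux_mult q hq _ hbB
  have hC : Multipliable (fun n : ℕ => 1 - q ^ (2 * n + 2)) := by
    simpa [sub_eq_add_neg] using aux_mult q hq _ hbC
  have hD : Multipliable (fun n : ℕ => 1 - q ^ (n + 1)) := by
    simpa [sub_eq_add_neg] using aux_mult q hq _ hbD
  have hCne : (∏' n : ℕ, (1 - q ^ (2 * n + 2))) ≠ 0 := by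
    have := aux_ne_zero q hq _ hbC
    simpa [sub_eq_add_neg] using this
  -- split D into even and odd parts: ∏ B * ∏ C = ∏ D
  have hsplit : (∏' n : ℕ, (1 - q ^ (2 * n + 1))) * (∏' n : ℕ, (1 - q ^ (2 * n + 2)))
      = ∏' n : ℕ, (1 - q ^ (n + 1)) := by
    have := tprod_even_mul_odd (f := fun n : ℕ => 1 - q ^ (n + 1))
      (by simpa using hB) (by simpa [Nat.add_assoc] using hC)
    simpa using this
  -- ∏ A * ∏ D = ∏ C
  have hAD : (∏' n : ℕ, (1 + q ^ (n + 1))) * (∏' n : ℕ, (1 - q ^ (n + 1)))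
      = ∏' n : ℕ, (1 - q ^ (2 * n + 2)) := by
    rw [← hA.tprod_mul hD]
    congr 1
    ext n
    ring
  -- conclude
  have key : (∏' n : ℕ, (1 + q ^ (n + 1))) * (∏' n : ℕ, (1 - q ^ (2 * n + 1))) = 1 := by
    have h1 : ((∏' n : ℕ, (1 + q ^ (n + 1))) * (∏' n : ℕ, (1 - q ^ (2 * n + 1))))
        * (∏' n : ℕ, (1 - q ^ (2 * n + 2))) = (∏' n : ℕ, (1 - q ^ (2 * n + 2))) := by
      rw [mul_assoc, hsplit, hAD]
    exact mul_right_cancel₀ hCne (by rw [h1, one_mul])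
  calc (∏' j : ℕ, (1 + q ^ (j + 1)) * (1 - q ^ (2 * (j + 1) - 1)))
      = (∏' n : ℕ, (1 + q ^ (n + 1))) * (∏' n : ℕ, (1 - q ^ (2 * n + 1))) := by
        have he : ∀ n : ℕ, 2 * (n + 1) - 1 = 2 * n + 1 := fun n => by omega
        simp_rw [he]
        rw [hA.tprod_mul hB]
    _ = 1 := key
end

section
/- For 0 < q < 1, log θ₃(q) = -2 ∑_{j=1}^{∞} (-1)^j ∑_{k=0}^{∞} q^{j(2k+1)}/(2k+1), with absolute convergence of the double series. -/
open Finset Filter Topology Real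

namespace Theta3Aux



/-- Numerator of the Gaussian binomial coefficient. -/
noncomputable def num (t : ℝ) (n k : ℕ) : ℝ := ∏ i ∈ range k, (1 - t ^ (n - i))

/-- Denominator of the Gaussian binomial coefficient. -/
noncomputable def den (t : ℝ) (k : ℕ) : ℝ := ∏ i ∈ range k, (1 - t ^ (i + 1))

/-- Gaussian binomial coefficient. -/
noncomputable def gb (t : ℝ) (n k : ℕ) : ℝ := num t n k / den t k

variable {t : ℝ}

lemma den_pos (ht0 : 0 < t) (ht1 : t < 1) (k : ℕ) : 0 < den t k := by
  refine Finset.prod_pos fun i _ => ?_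
  have : t ^ (i + 1) < 1 := pow_lt_one₀ ht0.le ht1 (Nat.succ_ne_zero i)
  linarith

lemma num_nonneg (ht0 : 0 < t) (ht1 : t < 1) (n k : ℕ) : 0 ≤ num t n k := by
  refine Finset.prod_nonneg fun i _ => ?_
  have : t ^ (n - i) ≤ 1 := pow_le_one₀ ht0.le ht1.le
  linarith

lemma num_le_one (ht0 : 0 < t) (ht1 : t < 1) (n k : ℕ) : num t n k ≤ 1 := by
  refine Finset.prod_le_one (fun i _ => ?_) (fun i _ => ?_)
  · have : t ^ (n - i) ≤ 1 := pow_le_one₀ ht0.le ht1.le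
    linarith
  · have : 0 < t ^ (n - i) := pow_pos ht0 _
    linarith

lemma gb_nonneg (ht0 : 0 < t) (ht1 : t < 1) (n k : ℕ) : 0 ≤ gb t n k :=
  div_nonneg (num_nonneg ht0 ht1 n k) (den_pos ht0 ht1 k).le

lemma gb_zero (n k : ℕ) (h : n < k) : gb t n k = 0 := by
  have : num t n k = 0 := by
    refine Finset.prod_eq_zero (Finset.mem_range.2 h) ?_
    simp
  simp [gb, this]

lemma gb_zero' (n : ℕ) : gb t n 0 = 1 := by simp [gb, num, den]

lemma num_pascal (n k : ℕ) (hk : k ≤ n) :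
    num t (n + 1) (k + 1) = num t n (k + 1) + t ^ (n - k) * (1 - t ^ (k + 1)) * num t n k := by
  have h1 : num t (n + 1) (k + 1) = (1 - t ^ (n + 1)) * num t n k := by
    rw [num, Finset.prod_range_succ']
    simp only [Nat.succ_sub_succ, Nat.sub_zero]
    rw [mul_comm]
    rfl
  have h2 : num t n (k + 1) = num t n k * (1 - t ^ (n - k)) := Finset.prod_range_succ _ _
  have h3 : t ^ (n - k) * t ^ (k + 1) = t ^ (n + 1) := by
    rw [← pow_add]
    congr 1
    omega
  rw [h1, h2, ← h3]
  ring

lemma den_succ (k : ℕ) : den t (k + 1) = den t k * (1 - t ^ (k + 1)) := Finset.prod_range_succ _ _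

lemma gb_pascal (ht0 : 0 < t) (ht1 : t < 1) (n k : ℕ) (hk : k ≤ n) :
    gb t (n + 1) (k + 1) = gb t n (k + 1) + t ^ (n - k) * gb t n k := by
  have hdk : den t k ≠ 0 := (den_pos ht0 ht1 k).ne'
  have hdk1 : den t (k + 1) ≠ 0 := (den_pos ht0 ht1 (k + 1)).ne'
  have hfac : (1 : ℝ) - t ^ (k + 1) ≠ 0 := by
    have : t ^ (k + 1) < 1 := pow_lt_one₀ ht0.le ht1 (Nat.succ_ne_zero k)
    linarith
  rw [gb, gb, gb, num_pascal n k hk, den_succ]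
  field_simp

/-- Gauss's q-binomial theorem. -/
lemma gauss (ht0 : 0 < t) (ht1 : t < 1) (z : ℝ) (n : ℕ) :
    ∏ j ∈ range n, (1 + z * t ^ j) =
      ∑ k ∈ range (n + 1), t ^ (k.choose 2) * gb t n k * z ^ k := by
  induction n with
  | zero => simp [gb_zero']
  | succ n ih =>
    rw [Finset.prod_range_succ, ih]
    have expand : ∑ k ∈ range (n + 2), t ^ (k.choose 2) * gb t (n + 1) k * z ^ k
        = (∑ k ∈ range (n + 1), t ^ ((k+1).choose 2) * gb t (n+1) (k+1) * z ^ (k+1)) + 1 := by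
      rw [Finset.sum_range_succ']
      simp [gb_zero']
    rw [expand]
    have pas : ∀ k ∈ range (n + 1),
        t ^ ((k+1).choose 2) * gb t (n+1) (k+1) * z ^ (k+1)
        = t ^ ((k+1).choose 2) * gb t n (k+1) * z ^ (k+1)
          + (z * t ^ n) * (t ^ (k.choose 2) * gb t n k * z ^ k) := by
      intro k hk
      have hk' : k ≤ n := by simpa using Nat.lt_succ_iff.mp (Finset.mem_range.mp hk)
      rw [gb_pascal ht0 ht1 n k hk']
      have hexp : t ^ ((k+1).choose 2) * t ^ (n - k) = t ^ n * t ^ (k.choose 2) := by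
        rw [← pow_add, ← pow_add]
        congr 1
        have h1 : (k+1).choose 2 = k.choose 2 + k := by
          rw [Nat.choose_succ_succ]
          simp [Nat.choose_one_right, Nat.add_comm]
        omega
      calc t ^ ((k+1).choose 2) * (gb t n (k+1) + t ^ (n-k) * gb t n k) * z ^ (k+1)
          = t ^ ((k+1).choose 2) * gb t n (k+1) * z ^ (k+1)
            + (t ^ ((k+1).choose 2) * t ^ (n-k)) * gb t n k * z ^ (k+1) := by ring
        _ = _ := by rw [hexp]; ring
    rw [Finset.sum_congr rfl pas, Finset.sum_add_distrib]
    have recomb : (∑ k ∈ range (n + 1), t ^ ((k+1).choose 2) * gb t n (k+1) * z ^ (k+1)) + 1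
        = ∑ k ∈ range (n + 1), t ^ (k.choose 2) * gb t n k * z ^ k := by
      have : ∑ k ∈ range (n + 2), t ^ (k.choose 2) * gb t n k * z ^ k
          = (∑ k ∈ range (n + 1), t ^ ((k+1).choose 2) * gb t n (k+1) * z ^ (k+1)) + 1 := by
        rw [Finset.sum_range_succ']
        simp [gb_zero']
      rw [← this, Finset.sum_range_succ, gb_zero n (n+1) (by omega)]
      ring
    rw [← Finset.mul_sum]
    linear_combination -recomb


variable {q : ℝ}

lemma two_choose_two (k : ℕ) : 2 * k.choose 2 = k * (k - 1) := by
  rw [Nat.choose_two_right, Nat.mul_div_cancel' (even_iff_two_dvd.mp (Nat.even_mul_pred_self k))]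

lemma sum_range_odds (N : ℕ) : ∑ j ∈ range N, (2 * j + 1) = N ^ 2 := by
  induction N with
  | zero => simp
  | succ n ih => rw [Finset.sum_range_succ, ih]; ring

/-- The key finite identity. -/
lemma key (hq0 : 0 < q) (hq1 : q < 1) (N : ℕ) :
    ∏ j ∈ range N, (1 + q ^ (2 * j + 1)) ^ 2
      = ∑ k ∈ range (2 * N + 1), gb (q ^ 2) (2 * N) k * q ^ (((k : ℤ) - N) ^ 2) := by
  have hqne : q ≠ 0 := hq0.ne'
  have ht0 : 0 < q ^ 2 := by positivity
  have ht1 : q ^ 2 < 1 := by nlinarith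
  have G := gauss ht0 ht1 (q ^ ((1 : ℤ) - 2 * N)) (2 * N)
  -- rewrite factors of the LHS of Gauss's identity
  have hfac : ∀ j : ℕ, 1 + q ^ ((1 : ℤ) - 2 * N) * (q ^ 2) ^ j
      = 1 + q ^ (2 * (j : ℤ) + 1 - 2 * N) := by
    intro j
    rw [← zpow_natCast (q ^ 2) j, ← zpow_natCast q 2, ← zpow_mul, ← zpow_add₀ hqne]
    norm_num
    ring_nf
  simp only [hfac] at G
  -- multiply Gauss by q^(N^2)
  have hGmul := congrArg (fun x => q ^ (N ^ 2) * x) G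
  -- LHS transformation
  have hsplit : ∏ j ∈ range (2 * N), (1 + q ^ (2 * (j : ℤ) + 1 - 2 * N))
      = (∏ j ∈ range N, (1 + q ^ (2 * (j : ℤ) + 1 - 2 * N)))
        * ∏ j ∈ range N, (1 + q ^ (2 * j + 1)) := by
    rw [two_mul, Finset.prod_range_add]
    congr 1
    refine Finset.prod_congr rfl fun j _ => ?_
    have : 2 * ((N + j : ℕ) : ℤ) + 1 - 2 * N = ((2 * j + 1 : ℕ) : ℤ) := by push_cast; ring
    rw [this, zpow_natCast]
  have hrefl : ∏ j ∈ range N, (1 + q ^ (2 * (j : ℤ) + 1 - 2 * N))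
      = ∏ j ∈ range N, (1 + q ^ (-(2 * (j : ℤ) + 1))) := by
    rw [← Finset.prod_range_reflect]
    refine Finset.prod_congr rfl fun j hj => ?_
    have hj' : j < N := Finset.mem_range.mp hj
    congr 2
    have : ((N - 1 - j : ℕ) : ℤ) = (N : ℤ) - 1 - j := by omega
    rw [this]; ring
  have hqpow : q ^ (N ^ 2) = ∏ j ∈ range N, q ^ (2 * j + 1) := by
    rw [Finset.prod_pow_eq_pow_sum, sum_range_odds]
  have hlhs : q ^ (N ^ 2) * ∏ j ∈ range (2 * N), (1 + q ^ (2 * (j : ℤ) + 1 - 2 * N))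
      = ∏ j ∈ range N, (1 + q ^ (2 * j + 1)) ^ 2 := by
    rw [hsplit, hrefl, hqpow, ← mul_assoc, ← Finset.prod_mul_distrib, ← Finset.prod_mul_distrib]
    refine Finset.prod_congr rfl fun j _ => ?_
    have h1 : q ^ (2 * j + 1) * q ^ (-(2 * (j : ℤ) + 1)) = 1 := by
      rw [← zpow_natCast q (2 * j + 1), ← zpow_add₀ hqne]
      have h0 : ((2 * j + 1 : ℕ) : ℤ) + -(2 * (j : ℤ) + 1) = 0 := by push_cast; ring
      rw [h0, zpow_zero]
    have expand : q ^ (2 * j + 1) * (1 + q ^ (-(2 * (j : ℤ) + 1)))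
        = q ^ (2 * j + 1) + 1 := by
      rw [mul_add, mul_one, h1]
    rw [expand]; ring
  -- RHS transformation
  have hrhs : q ^ (N ^ 2) * ∑ k ∈ range (2 * N + 1),
        (q ^ 2) ^ (k.choose 2) * gb (q ^ 2) (2 * N) k * (q ^ ((1 : ℤ) - 2 * N)) ^ k
      = ∑ k ∈ range (2 * N + 1), gb (q ^ 2) (2 * N) k * q ^ (((k : ℤ) - N) ^ 2) := by
    rw [Finset.mul_sum]
    refine Finset.sum_congr rfl fun k _ => ?_
    have h1 : (q ^ 2) ^ (k.choose 2) = q ^ ((2 * k.choose 2 : ℕ) : ℤ) := by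
      rw [zpow_natCast, pow_mul]
    have h2 : (q ^ ((1 : ℤ) - 2 * N)) ^ k = q ^ (((1 : ℤ) - 2 * N) * k) := by
      rw [← zpow_natCast (q ^ ((1 : ℤ) - 2 * N)) k, ← zpow_mul]
    have h3 : q ^ (N ^ 2) = q ^ ((N : ℤ) ^ 2) := by
      rw [← zpow_natCast q (N ^ 2)]; push_cast; ring_nf
    have h4 : ((2 * k.choose 2 : ℕ) : ℤ) = (k : ℤ) * (k - 1) := by
      rw [two_choose_two]
      push_cast [Nat.cast_sub]
      rcases Nat.eq_zero_or_pos k with hk | hk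
      · subst hk; simp
      · have : ((k - 1 : ℕ) : ℤ) = (k : ℤ) - 1 := by omega
        rw [this]
    have hg : ∀ (a b c : ℤ) (g : ℝ), q ^ a * (q ^ b * g * q ^ c) = g * q ^ (a + b + c) := by
      intro a b c g
      rw [zpow_add₀ hqne, zpow_add₀ hqne]; ring
    have he : (N : ℤ) ^ 2 + (k : ℤ) * ((k : ℤ) - 1) + (1 - 2 * (N : ℤ)) * (k : ℤ)
        = ((k : ℤ) - (N : ℤ)) ^ 2 := by ring
    rw [h1, h2, h3, h4, hg, he]
  rw [← hlhs, hGmul, hrhs]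


section Weierstrass

lemma weierstrass (f : ℕ → ℝ) (h0 : ∀ i, 0 ≤ f i) (h1 : ∀ i, f i ≤ 1) (c : ℕ) :
    1 - ∑ i ∈ range c, f i ≤ ∏ i ∈ range c, (1 - f i) := by
  induction c with
  | zero => simp
  | succ c ih =>
    rw [Finset.sum_range_succ, Finset.prod_range_succ]
    have hpn : 0 ≤ ∑ i ∈ range c, f i := Finset.sum_nonneg fun i _ => h0 i
    nlinarith [h0 c, h1 c, ih]

lemma geom_tail_le (ht0 : 0 < t) (ht1 : t < 1) (a c : ℕ) :
    ∑ i ∈ range c, t ^ (a + i) ≤ t ^ a / (1 - t) := by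
  have h1 : ∑ i ∈ range c, t ^ (a + i) = t ^ a * ∑ i ∈ range c, t ^ i := by
    rw [Finset.mul_sum]
    exact Finset.sum_congr rfl fun i _ => pow_add t a i
  have h2 : ∑ i ∈ range c, t ^ i ≤ (1 - t)⁻¹ := by
    have := Summable.sum_le_tsum (range c) (fun i _ => (pow_nonneg ht0.le i))
      (summable_geometric_of_lt_one ht0.le ht1)
    rwa [tsum_geometric_of_lt_one ht0.le ht1] at this
  rw [h1, div_eq_mul_inv]
  exact mul_le_mul_of_nonneg_left h2 (pow_nonneg ht0.le a)

lemma prod_one_sub_ge (ht0 : 0 < t) (ht1 : t < 1) (a c : ℕ) :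
    1 - t ^ a / (1 - t) ≤ ∏ i ∈ range c, (1 - t ^ (a + i)) := by
  have h1 : 1 - ∑ i ∈ range c, t ^ (a + i) ≤ ∏ i ∈ range c, (1 - t ^ (a + i)) :=
    weierstrass _ (fun i => pow_nonneg ht0.le _) (fun i => pow_le_one₀ ht0.le ht1.le) c
  have := geom_tail_le ht0 ht1 a c
  linarith

lemma num_lower (ht0 : 0 < t) (ht1 : t < 1) (n k : ℕ) (hk : k ≤ n) :
    1 - t ^ (n - k + 1) / (1 - t) ≤ num t n k := by
  have hre : num t n k = ∏ i ∈ range k, (1 - t ^ (n - k + 1 + i)) := by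
    rw [num, ← Finset.prod_range_reflect]
    refine Finset.prod_congr rfl fun i hi => ?_
    have hi' : i < k := Finset.mem_range.mp hi
    congr 2
    omega
  rw [hre]
  exact prod_one_sub_ge ht0 ht1 (n - k + 1) k

end Weierstrass

section LogBounds

lemma neg_log_bounds (ht0 : 0 < t) (ht1 : t < 1) {x : ℝ} (hx0 : 0 ≤ x) (hxt : x ≤ t) :
    0 ≤ -Real.log (1 - x) ∧ -Real.log (1 - x) ≤ x / (1 - t) := by
  have h1x : 0 < 1 - x := by linarith
  constructor
  · have : Real.log (1 - x) ≤ 0 := Real.log_nonpos (by linarith) (by linarith)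
    linarith
  · have hinv : -Real.log (1 - x) = Real.log (1 - x)⁻¹ := by rw [Real.log_inv]
    have h2 : Real.log (1 - x)⁻¹ ≤ (1 - x)⁻¹ - 1 :=
      Real.log_le_sub_one_of_pos (by positivity)
    have h3 : (1 - x)⁻¹ - 1 = x / (1 - x) := by field_simp; ring
    have h4 : x / (1 - x) ≤ x / (1 - t) := by
      apply div_le_div_of_nonneg_left hx0 (by linarith) (by linarith)
    rw [hinv]
    linarith
  
lemma summable_neg_log (ht0 : 0 < t) (ht1 : t < 1) :
    Summable (fun i : ℕ => -Real.log (1 - t ^ (i + 1))) := by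
  have hb : Summable (fun i : ℕ => t ^ (i + 1) / (1 - t)) := by
    have := (summable_geometric_of_lt_one ht0.le ht1).mul_left (t / (1 - t))
    refine this.congr fun i => ?_
    rw [pow_succ']
    ring
  refine hb.of_nonneg_of_le (fun i => ?_) (fun i => ?_)
  · exact (neg_log_bounds ht0 ht1 (pow_nonneg ht0.le _)
      (pow_le_of_le_one ht0.le ht1.le (Nat.succ_ne_zero i))).1
  · exact (neg_log_bounds ht0 ht1 (pow_nonneg ht0.le _)
      (pow_le_of_le_one ht0.le ht1.le (Nat.succ_ne_zero i))).2

lemma summable_log (ht0 : 0 < t) (ht1 : t < 1) :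
    Summable (fun i : ℕ => Real.log (1 - t ^ (i + 1))) := by
  simpa using (summable_neg_log ht0 ht1).neg

/-- The limit of `den t k`. -/
noncomputable def Cden (t : ℝ) : ℝ := rexp (∑' i : ℕ, Real.log (1 - t ^ (i + 1)))

lemma Cden_pos : 0 < Cden t := Real.exp_pos _

lemma den_eq_exp (ht0 : 0 < t) (ht1 : t < 1) (k : ℕ) :
    den t k = rexp (∑ i ∈ range k, Real.log (1 - t ^ (i + 1))) := by
  rw [Real.exp_sum]
  refine Finset.prod_congr rfl fun i _ => ?_
  rw [Real.exp_log]
  have : t ^ (i + 1) < 1 := pow_lt_one₀ ht0.le ht1 (Nat.succ_ne_zero i)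
  linarith

lemma tendsto_den (ht0 : 0 < t) (ht1 : t < 1) :
    Tendsto (fun k => den t k) atTop (𝓝 (Cden t)) := by
  have h := (summable_log ht0 ht1).hasSum.tendsto_sum_nat
  have := (Real.continuous_exp.continuousAt (x := ∑' i : ℕ, Real.log (1 - t ^ (i + 1)))).tendsto.comp h
  refine this.congr fun k => ?_
  exact (den_eq_exp ht0 ht1 k).symm

lemma Cden_le_den (ht0 : 0 < t) (ht1 : t < 1) (k : ℕ) : Cden t ≤ den t k := by
  rw [den_eq_exp ht0 ht1 k, Cden]
  apply Real.exp_le_exp.mpr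
  have := Summable.sum_le_tsum (f := fun i : ℕ => -Real.log (1 - t ^ (i + 1))) (range k)
    (fun i _ => (neg_log_bounds ht0 ht1 (pow_nonneg ht0.le _)
      (pow_le_of_le_one ht0.le ht1.le (Nat.succ_ne_zero i))).1)
    (summable_neg_log ht0 ht1)
  have htsum : ∑' i : ℕ, -Real.log (1 - t ^ (i + 1))
      = -∑' i : ℕ, Real.log (1 - t ^ (i + 1)) := tsum_neg
  rw [htsum] at this
  simp only [Finset.sum_neg_distrib] at this
  linarith

lemma den_le_one (ht0 : 0 < t) (ht1 : t < 1) (k : ℕ) : den t k ≤ 1 := by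
  refine Finset.prod_le_one (fun i _ => ?_) (fun i _ => ?_)
  · have : t ^ (i + 1) ≤ 1 := pow_le_one₀ ht0.le ht1.le
    linarith
  · have : 0 < t ^ (i + 1) := pow_pos ht0 _
    linarith

end LogBounds

section Limit

variable {q : ℝ}

/-- Summand in the truncated theta identity. -/
noncomputable def bfun (q : ℝ) (N : ℕ) (m : ℤ) : ℝ :=
  if m.natAbs ≤ N then
    den (q ^ 2) N * gb (q ^ 2) (2 * N) (((N : ℤ) + m).toNat) * q ^ (m.natAbs ^ 2)
  else 0

lemma summable_theta (hq0 : 0 < q) (hq1 : q < 1) :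
    Summable (fun m : ℤ => q ^ (m.natAbs ^ 2)) := by
  have hnat : Summable (fun n : ℕ => q ^ (n ^ 2)) := by
    refine (summable_geometric_of_lt_one hq0.le hq1).of_nonneg_of_le
      (fun n => pow_nonneg hq0.le _) (fun n => ?_)
    exact pow_le_pow_of_le_one hq0.le hq1.le (Nat.le_self_pow two_ne_zero n)
  refine Summable.of_nat_of_neg ?_ ?_
  · simpa using hnat
  · simpa using hnat


lemma zpow_sq_eq (hq : q ≠ 0) (m : ℤ) : q ^ (m ^ 2) = q ^ (m.natAbs ^ 2) := by
  rw [← zpow_natCast q (m.natAbs ^ 2)]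
  congr 1
  push_cast
  rw [sq_abs]

lemma tsum_bfun (hq0 : 0 < q) (hq1 : q < 1) (N : ℕ) :
    ∑' m : ℤ, bfun q N m
      = den (q ^ 2) N * ∏ j ∈ range N, (1 + q ^ (2 * j + 1)) ^ 2 := by
  have hqne : q ≠ 0 := hq0.ne'
  have hsupp : ∀ m ∉ Finset.Icc (-(N : ℤ)) (N : ℤ), bfun q N m = 0 := by
    intro m hm
    rw [Finset.mem_Icc] at hm
    rw [bfun, if_neg]
    omega
  rw [tsum_eq_sum hsupp, key hq0 hq1 N, Finset.mul_sum]
  refine Finset.sum_nbij' (i := fun m => ((N : ℤ) + m).toNat)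
    (j := fun k => (k : ℤ) - N) ?_ ?_ ?_ ?_ ?_
  · intro m hm
    rw [Finset.mem_Icc] at hm
    rw [Finset.mem_range]
    omega
  · intro k hk
    rw [Finset.mem_range] at hk
    rw [Finset.mem_Icc]
    omega
  · intro m hm
    rw [Finset.mem_Icc] at hm
    omega
  · intro k hk
    rw [Finset.mem_range] at hk
    omega
  · intro m hm
    rw [Finset.mem_Icc] at hm
    rw [bfun, if_pos (by omega)]
    have h1 : ((((N : ℤ) + m).toNat : ℤ)) - (N : ℤ) = m := by omega
    rw [h1, zpow_sq_eq hqne m]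
    ring

lemma bfun_bound (hq0 : 0 < q) (hq1 : q < 1) (N : ℕ) (m : ℤ) :
    |bfun q N m| ≤ (Cden (q ^ 2))⁻¹ * q ^ (m.natAbs ^ 2) := by
  have ht0 : (0 : ℝ) < q ^ 2 := by positivity
  have ht1 : q ^ 2 < 1 := by nlinarith
  have hC : (0 : ℝ) < Cden (q ^ 2) := Cden_pos
  rw [bfun]
  split_ifs with h
  · have hd := den_pos ht0 ht1 N
    have hg := gb_nonneg ht0 ht1 (2 * N) (((N : ℤ) + m).toNat)
    have hqp : (0:ℝ) < q ^ (m.natAbs ^ 2) := pow_pos hq0 _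
    rw [abs_of_nonneg (by positivity)]
    have h1 : gb (q ^ 2) (2 * N) (((N : ℤ) + m).toNat) ≤ (Cden (q ^ 2))⁻¹ := by
      rw [gb, ← one_div]
      exact div_le_div₀ zero_le_one (num_le_one ht0 ht1 _ _) Cden_pos (Cden_le_den ht0 ht1 _)
    calc den (q ^ 2) N * gb (q ^ 2) (2 * N) (((N : ℤ) + m).toNat) * q ^ (m.natAbs ^ 2)
        ≤ 1 * (Cden (q ^ 2))⁻¹ * q ^ (m.natAbs ^ 2) := by
          refine mul_le_mul (mul_le_mul (den_le_one ht0 ht1 N) h1 hg zero_le_one)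
            le_rfl hqp.le (by positivity)
      _ = (Cden (q ^ 2))⁻¹ * q ^ (m.natAbs ^ 2) := by ring
  · rw [abs_zero]
    positivity

end Limit


lemma tendsto_toNat_atTop (m : ℤ) :
    Tendsto (fun N : ℕ => ((N : ℤ) + m).toNat) atTop atTop := by
  refine tendsto_atTop.mpr fun b => eventually_atTop.mpr ⟨b + m.natAbs, fun N hN => ?_⟩
  omega

lemma tendsto_num (hq0 : 0 < q) (hq1 : q < 1) (m : ℤ) :
    Tendsto (fun N : ℕ => num (q ^ 2) (2 * N) (((N : ℤ) + m).toNat)) atTop (𝓝 1) := by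
  have ht0 : (0 : ℝ) < q ^ 2 := by positivity
  have ht1 : q ^ 2 < 1 := by nlinarith
  set t := q ^ 2
  set a := m.natAbs
  have hlow : Tendsto (fun N : ℕ => 1 - t ^ (N - a + 1) / (1 - t)) atTop (𝓝 1) := by
    have h1 : Tendsto (fun N : ℕ => N - a + 1) atTop atTop := by
      refine tendsto_atTop.mpr fun b => eventually_atTop.mpr ⟨b + a, fun N hN => ?_⟩
      omega
    have h2 : Tendsto (fun N : ℕ => t ^ (N - a + 1)) atTop (𝓝 0) :=
      (tendsto_pow_atTop_nhds_zero_of_lt_one ht0.le ht1).comp h1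
    have h3 := ((h2.div_const (1 - t)).const_sub 1)
    simpa using h3
  refine tendsto_of_tendsto_of_tendsto_of_le_of_le' hlow tendsto_const_nhds ?_ ?_
  · filter_upwards [eventually_ge_atTop a] with N hN
    have hk2N : (((N : ℤ) + m).toNat) ≤ 2 * N := by omega
    have h1 := num_lower ht0 ht1 (2 * N) (((N : ℤ) + m).toNat) hk2N
    have hexp : N - a + 1 ≤ 2 * N - (((N : ℤ) + m).toNat) + 1 := by omega
    have h2 : t ^ (2 * N - (((N : ℤ) + m).toNat) + 1) ≤ t ^ (N - a + 1) :=
      pow_le_pow_of_le_one ht0.le ht1.le hexp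
    have h1t : (0 : ℝ) < 1 - t := by linarith
    have h3 : t ^ (2 * N - (((N : ℤ) + m).toNat) + 1) / (1 - t) ≤ t ^ (N - a + 1) / (1 - t) := by
      gcongr
    linarith
  · exact Eventually.of_forall fun N => num_le_one ht0 ht1 _ _

lemma tendsto_bfun (hq0 : 0 < q) (hq1 : q < 1) (m : ℤ) :
    Tendsto (fun N : ℕ => bfun q N m) atTop (𝓝 (q ^ (m.natAbs ^ 2))) := by
  have ht0 : (0 : ℝ) < q ^ 2 := by positivity
  have ht1 : q ^ 2 < 1 := by nlinarith
  have hC : (0 : ℝ) < Cden (q ^ 2) := Cden_pos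
  have t1 : Tendsto (fun N : ℕ => den (q ^ 2) N) atTop (𝓝 (Cden (q ^ 2))) :=
    tendsto_den ht0 ht1
  have t2 : Tendsto (fun N : ℕ => den (q ^ 2) (((N : ℤ) + m).toNat)) atTop
      (𝓝 (Cden (q ^ 2))) := (tendsto_den ht0 ht1).comp (tendsto_toNat_atTop m)
  have t3 := tendsto_num hq0 hq1 m
  have tcore : Tendsto (fun N : ℕ =>
      den (q ^ 2) N * num (q ^ 2) (2 * N) (((N : ℤ) + m).toNat)
        / den (q ^ 2) (((N : ℤ) + m).toNat)) atTop (𝓝 1) := by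
    have h4 := (t1.mul t3).div t2 hC.ne'
    rw [mul_one, div_self hC.ne'] at h4
    exact h4
  have tfin := tcore.mul_const (q ^ (m.natAbs ^ 2))
  rw [one_mul] at tfin
  refine tfin.congr' ?_
  filter_upwards [eventually_ge_atTop m.natAbs] with N hN
  rw [bfun, if_pos hN, gb]
  ring

theorem tendsto_theta_prod (hq0 : 0 < q) (hq1 : q < 1) :
    Tendsto (fun N : ℕ => den (q ^ 2) N * ∏ j ∈ range N, (1 + q ^ (2 * j + 1)) ^ 2)
      atTop (𝓝 (∑' m : ℤ, q ^ (m.natAbs ^ 2))) := by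
  have h := tendsto_tsum_of_dominated_convergence
    (f := fun (N : ℕ) (m : ℤ) => bfun q N m)
    (g := fun m : ℤ => q ^ (m.natAbs ^ 2))
    (bound := fun m : ℤ => (Cden (q ^ 2))⁻¹ * q ^ (m.natAbs ^ 2))
    ((summable_theta hq0 hq1).mul_left _)
    (tendsto_bfun hq0 hq1)
    (Eventually.of_forall fun N m => by
      simpa [Real.norm_eq_abs] using bfun_bound hq0 hq1 N m)
  refine h.congr fun N => ?_
  exact tsum_bfun hq0 hq1 N


section Logs

lemma abs_log_one_add_le (hq0 : 0 < q) (hq1 : q < 1) {y : ℝ} (hy : |y| ≤ q) :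
    |Real.log (1 + y)| ≤ |y| / (1 - q) := by
  have h1q : (0 : ℝ) < 1 - q := by linarith
  rcases le_or_gt 0 y with hy0 | hy0
  · rw [abs_of_nonneg hy0] at hy ⊢
    have h1 : Real.log (1 + y) ≤ y := by
      have := Real.log_le_sub_one_of_pos (x := 1 + y) (by linarith)
      linarith
    have h2 : 0 ≤ Real.log (1 + y) := Real.log_nonneg (by linarith)
    rw [abs_of_nonneg h2]
    calc Real.log (1 + y) ≤ y := h1
      _ ≤ y / (1 - q) := by
        rw [le_div_iff₀ h1q]
        nlinarith
  · rw [abs_of_neg hy0] at hy ⊢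
    have h1y : 1 + y = 1 - (-y) := by ring
    rw [h1y]
    have hb := neg_log_bounds hq0 hq1 (x := -y) (by linarith) hy
    rw [abs_of_nonpos (by linarith [hb.1])]
    exact hb.2

/-- Summability of `log(1 + ε q^(c i + d))`. -/
lemma summable_log_pm (hq0 : 0 < q) (hq1 : q < 1) (ε : ℝ) (hε : |ε| = 1)
    (c d : ℕ) (hc : 1 ≤ c) (hd : 1 ≤ d) :
    Summable (fun i : ℕ => Real.log (1 + ε * q ^ (c * i + d))) := by
  have h1q : (0 : ℝ) < 1 - q := by linarith
  have hgeo : Summable (fun i : ℕ => q ^ (i + 1) / (1 - q)) := by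
    have := (summable_geometric_of_lt_one hq0.le hq1).mul_left (q / (1 - q))
    refine this.congr fun i => ?_
    rw [pow_succ']
    ring
  refine Summable.of_norm_bounded hgeo fun i => ?_
  have habs : |ε * q ^ (c * i + d)| = q ^ (c * i + d) := by
    rw [abs_mul, hε, one_mul, abs_of_nonneg (by positivity)]
  have hle : q ^ (c * i + d) ≤ q := by
    calc q ^ (c * i + d) ≤ q ^ 1 := pow_le_pow_of_le_one hq0.le hq1.le (by omega)
      _ = q := pow_one q
  have := abs_log_one_add_le hq0 hq1 (y := ε * q ^ (c * i + d)) (by rw [habs]; exact hle)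
  rw [habs] at this
  refine this.trans ?_
  have h2 : q ^ (c * i + d) ≤ q ^ (i + 1) := pow_le_pow_of_le_one hq0.le hq1.le
    (by have := Nat.le_mul_of_pos_left i hc; omega)
  gcongr

end Logs


section Final

variable (hq0 : 0 < q) (hq1 : q < 1)

-- summability of the six log series
lemma sA (hq0 : 0 < q) (hq1 : q < 1) : Summable (fun i : ℕ => Real.log (1 - q ^ (2 * i + 2))) := by
  refine (summable_log_pm hq0 hq1 (-1) (by norm_num) 2 2 one_le_two one_le_two).congr fun i => ?_
  rw [neg_one_mul, ← sub_eq_add_neg]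

lemma sB (hq0 : 0 < q) (hq1 : q < 1) : Summable (fun i : ℕ => Real.log (1 + q ^ (2 * i + 1))) := by
  refine (summable_log_pm hq0 hq1 1 (by norm_num) 2 1 one_le_two le_rfl).congr fun i => ?_
  rw [one_mul]

lemma sO (hq0 : 0 < q) (hq1 : q < 1) : Summable (fun i : ℕ => Real.log (1 - q ^ (2 * i + 1))) := by
  refine (summable_log_pm hq0 hq1 (-1) (by norm_num) 2 1 one_le_two le_rfl).congr fun i => ?_
  rw [neg_one_mul, ← sub_eq_add_neg]

lemma sP (hq0 : 0 < q) (hq1 : q < 1) : Summable (fun i : ℕ => Real.log (1 + q ^ (2 * i + 2))) := by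
  refine (summable_log_pm hq0 hq1 1 (by norm_num) 2 2 one_le_two one_le_two).congr fun i => ?_
  rw [one_mul]

lemma sD (hq0 : 0 < q) (hq1 : q < 1) : Summable (fun i : ℕ => Real.log (1 - q ^ (i + 1))) := by
  refine (summable_log_pm hq0 hq1 (-1) (by norm_num) 1 1 le_rfl le_rfl).congr fun i => ?_
  rw [neg_one_mul, ← sub_eq_add_neg, one_mul]

lemma sE (hq0 : 0 < q) (hq1 : q < 1) : Summable (fun i : ℕ => Real.log (1 + q ^ (i + 1))) := by
  refine (summable_log_pm hq0 hq1 1 (by norm_num) 1 1 le_rfl le_rfl).congr fun i => ?_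
  rw [one_mul, one_mul]

lemma factor_pos (hq0 : 0 < q) (hq1 : q < 1) (e : ℕ) (he : 1 ≤ e) :
    0 < 1 - q ^ e ∧ 0 < 1 + q ^ e := by
  have h1 : q ^ e < 1 := pow_lt_one₀ hq0.le hq1 (by omega)
  have h2 : 0 < q ^ e := pow_pos hq0 e
  constructor <;> linarith

/-- logarithm of the theta function as two log series. -/
lemma log_theta_eq (hq0 : 0 < q) (hq1 : q < 1) :
    Real.log (∑' m : ℤ, q ^ (m.natAbs ^ 2))
      = (∑' i : ℕ, Real.log (1 - q ^ (2 * i + 2)))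
        + 2 * ∑' i : ℕ, Real.log (1 + q ^ (2 * i + 1)) := by
  have ht0 : (0 : ℝ) < q ^ 2 := by positivity
  have ht1 : q ^ 2 < 1 := by nlinarith
  have hθs := summable_theta hq0 hq1
  have hθ1 : (1 : ℝ) ≤ ∑' m : ℤ, q ^ (m.natAbs ^ 2) := by
    have := Summable.le_tsum hθs 0 (fun m _ => pow_nonneg hq0.le _)
    simpa using this
  have hθ0 : (0 : ℝ) < ∑' m : ℤ, q ^ (m.natAbs ^ 2) := by linarith
  have hlog := ((Real.continuousAt_log hθ0.ne').tendsto).comp (tendsto_theta_prod hq0 hq1)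
  have heq : ∀ N : ℕ, Real.log (den (q ^ 2) N * ∏ j ∈ range N, (1 + q ^ (2 * j + 1)) ^ 2)
      = (∑ i ∈ range N, Real.log (1 - q ^ (2 * i + 2)))
        + 2 * ∑ j ∈ range N, Real.log (1 + q ^ (2 * j + 1)) := by
    intro N
    have hd := den_pos ht0 ht1 N
    have hp : (0 : ℝ) < ∏ j ∈ range N, (1 + q ^ (2 * j + 1)) ^ 2 :=
      Finset.prod_pos fun j _ => pow_pos (factor_pos hq0 hq1 _ (by omega)).2 2
    rw [Real.log_mul hd.ne' hp.ne']
    congr 1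
    · have hne : ∀ i ∈ range N, (1 : ℝ) - (q ^ 2) ^ (i + 1) ≠ 0 := by
        intro i _
        have h1 : (q ^ 2) ^ (i + 1) < 1 := pow_lt_one₀ ht0.le ht1 (Nat.succ_ne_zero i)
        intro hcon
        nlinarith [hcon]
      rw [den, Real.log_prod hne]
      refine Finset.sum_congr rfl fun i _ => ?_
      have hE : 2 * (i + 1) = 2 * i + 2 := by omega
      rw [← pow_mul, hE]
    · rw [Real.log_prod (fun j _ => (pow_pos (factor_pos hq0 hq1 _ (by omega)).2 2).ne'),
        Finset.mul_sum]
      refine Finset.sum_congr rfl fun j _ => ?_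
      rw [Real.log_pow]
      push_cast
      ring
  have hst : Tendsto (fun N : ℕ => (∑ i ∈ range N, Real.log (1 - q ^ (2 * i + 2)))
      + 2 * ∑ j ∈ range N, Real.log (1 + q ^ (2 * j + 1))) atTop
      (𝓝 ((∑' i : ℕ, Real.log (1 - q ^ (2 * i + 2)))
        + 2 * ∑' i : ℕ, Real.log (1 + q ^ (2 * i + 1)))) := by
    exact ((sA hq0 hq1).hasSum.tendsto_sum_nat).add
      (((sB hq0 hq1).hasSum.tendsto_sum_nat).const_mul 2)
  refine tendsto_nhds_unique ?_ hst
  refine hlog.congr fun N => ?_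
  exact heq N

lemma tsum_D_split (hq0 : 0 < q) (hq1 : q < 1) :
    (∑' i : ℕ, Real.log (1 - q ^ (i + 1)))
      = (∑' i : ℕ, Real.log (1 - q ^ (2 * i + 1)))
        + ∑' i : ℕ, Real.log (1 - q ^ (2 * i + 2)) := by
  have he : HasSum (fun i : ℕ => Real.log (1 - q ^ (2 * i + 1)))
      (∑' i : ℕ, Real.log (1 - q ^ (2 * i + 1))) := (sO hq0 hq1).hasSum
  have ho : HasSum (fun i : ℕ => Real.log (1 - q ^ (2 * i + 2)))
      (∑' i : ℕ, Real.log (1 - q ^ (2 * i + 2))) := (sA hq0 hq1).hasSum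
  have hfun : (fun k : ℕ => Real.log (1 - q ^ (2 * k + 1 + 1)))
      = fun k : ℕ => Real.log (1 - q ^ (2 * k + 2)) := by
    funext k
    have h : 2 * k + 1 + 1 = 2 * k + 2 := by omega
    rw [h]
  rw [← hfun] at ho
  exact (HasSum.even_add_odd (f := fun i : ℕ => Real.log (1 - q ^ (i + 1))) he ho).tsum_eq

lemma tsum_E_split (hq0 : 0 < q) (hq1 : q < 1) :
    (∑' i : ℕ, Real.log (1 + q ^ (i + 1)))
      = (∑' i : ℕ, Real.log (1 + q ^ (2 * i + 1)))
        + ∑' i : ℕ, Real.log (1 + q ^ (2 * i + 2)) := by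
  have he : HasSum (fun i : ℕ => Real.log (1 + q ^ (2 * i + 1)))
      (∑' i : ℕ, Real.log (1 + q ^ (2 * i + 1))) := (sB hq0 hq1).hasSum
  have ho : HasSum (fun i : ℕ => Real.log (1 + q ^ (2 * i + 2)))
      (∑' i : ℕ, Real.log (1 + q ^ (2 * i + 2))) := (sP hq0 hq1).hasSum
  have hfun : (fun k : ℕ => Real.log (1 + q ^ (2 * k + 1 + 1)))
      = fun k : ℕ => Real.log (1 + q ^ (2 * k + 2)) := by
    funext k
    have h : 2 * k + 1 + 1 = 2 * k + 2 := by omega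
    rw [h]
  rw [← hfun] at ho
  exact (HasSum.even_add_odd (f := fun i : ℕ => Real.log (1 + q ^ (i + 1))) he ho).tsum_eq

lemma euler (hq0 : 0 < q) (hq1 : q < 1) :
    (∑' i : ℕ, Real.log (1 + q ^ (i + 1)))
      = -(∑' i : ℕ, Real.log (1 - q ^ (2 * i + 1))) := by
  have hterm : ∀ m : ℕ, Real.log (1 + q ^ (m + 1))
      = Real.log (1 - q ^ (2 * m + 2)) - Real.log (1 - q ^ (m + 1)) := by
    intro m
    have hsq : q ^ (2 * m + 2) = q ^ (m + 1) * q ^ (m + 1) := by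
      rw [← pow_add]; congr 1; omega
    have hfac : (1 : ℝ) - q ^ (2 * m + 2) = (1 - q ^ (m + 1)) * (1 + q ^ (m + 1)) := by
      rw [hsq]; ring
    rw [hfac, Real.log_mul (factor_pos hq0 hq1 (m+1) (by omega)).1.ne'
      (factor_pos hq0 hq1 (m+1) (by omega)).2.ne']
    ring
  have h1 : (∑' i : ℕ, Real.log (1 + q ^ (i + 1)))
      = (∑' i : ℕ, (Real.log (1 - q ^ (2 * i + 2)) - Real.log (1 - q ^ (i + 1)))) :=
    tsum_congr hterm
  rw [h1, Summable.tsum_sub (sA hq0 hq1) (sD hq0 hq1), tsum_D_split hq0 hq1]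
  ring

/-- the inner series. -/
lemma inner_sum (hq0 : 0 < q) (hq1 : q < 1) (j : ℕ) :
    HasSum (fun k : ℕ => q ^ ((j + 1) * (2 * k + 1)) / (2 * (k : ℝ) + 1))
      ((Real.log (1 + q ^ (j + 1)) - Real.log (1 - q ^ (j + 1))) / 2) := by
  have hx : |q ^ (j + 1)| < 1 := by
    rw [abs_of_nonneg (by positivity)]
    exact pow_lt_one₀ hq0.le hq1 (Nat.succ_ne_zero j)
  have h := (hasSum_log_sub_log_of_abs_lt_one hx).div_const 2
  refine h.congr_fun fun k => ?_
  rw [pow_mul]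
  have h2k : (2 * (k : ℝ) + 1) ≠ 0 := by positivity
  field_simp

end Final


end Theta3Aux

open Theta3Aux in
/-- For `0 < q < 1`,
`log θ₃(q) = -2 ∑_{j=1}^∞ (-1)^j ∑_{k=0}^∞ q^{j(2k+1)}/(2k+1)`,
with absolute convergence of the double series. -/
theorem log_theta3_double_series (q : ℝ) (hq0 : 0 < q) (hq1 : q < 1) :
    Summable (fun p : ℕ × ℕ => |q ^ ((p.1 + 1) * (2 * p.2 + 1)) / (2 * p.2 + 1)|) ∧
    Real.log (∑' n : ℤ, q ^ ((n : ℝ) ^ 2)) =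
      -2 * ∑' j : ℕ, (-1 : ℝ) ^ (j + 1) *
        ∑' k : ℕ, q ^ ((j + 1) * (2 * k + 1)) / (2 * k + 1) := by
  constructor
  · -- summability of the double series
    have hs1 : Summable (fun p : ℕ × ℕ => (q * q ^ p.1) * ((q ^ 2) ^ p.2)) :=
      Summable.mul_of_nonneg
        ((summable_geometric_of_lt_one hq0.le hq1).mul_left q)
        (summable_geometric_of_lt_one (by positivity) (by nlinarith))
        (fun i => by positivity) (fun j => by positivity)
    refine hs1.of_nonneg_of_le (fun p => abs_nonneg _) (fun p => ?_)
    have hd1 : (1 : ℝ) ≤ 2 * (p.2 : ℝ) + 1 := by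
      have h := Nat.cast_nonneg (α := ℝ) p.2
      linarith
    have habs : |q ^ ((p.1 + 1) * (2 * p.2 + 1)) / (2 * (p.2 : ℝ) + 1)|
        = q ^ ((p.1 + 1) * (2 * p.2 + 1)) / (2 * (p.2 : ℝ) + 1) := by
      rw [abs_of_nonneg]
      positivity
    rw [habs]
    have h2 : q ^ ((p.1 + 1) * (2 * p.2 + 1)) / (2 * (p.2 : ℝ) + 1)
        ≤ q ^ ((p.1 + 1) * (2 * p.2 + 1)) :=
      div_le_self (by positivity) hd1
    have he : (p.1 + 1) + 2 * p.2 ≤ (p.1 + 1) * (2 * p.2 + 1) := by nlinarith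
    have h3 : q ^ ((p.1 + 1) * (2 * p.2 + 1)) ≤ q ^ ((p.1 + 1) + 2 * p.2) :=
      pow_le_pow_of_le_one hq0.le hq1.le he
    have h4 : q ^ ((p.1 + 1) + 2 * p.2) = (q * q ^ p.1) * ((q ^ 2) ^ p.2) := by
      rw [pow_add, pow_mul, pow_succ']
    linarith
  · -- the identity
    have hθeq : (∑' n : ℤ, q ^ ((n : ℝ) ^ 2)) = ∑' m : ℤ, q ^ (m.natAbs ^ 2) := by
      refine tsum_congr fun n => ?_
      rw [← Real.rpow_natCast q (n.natAbs ^ 2)]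
      congr 1
      push_cast [Nat.cast_natAbs]
      rw [sq_abs]
    have hinner : ∀ j : ℕ, (∑' k : ℕ, q ^ ((j + 1) * (2 * k + 1)) / (2 * (k : ℝ) + 1))
        = (Real.log (1 + q ^ (j + 1)) - Real.log (1 - q ^ (j + 1))) / 2 :=
      fun j => (inner_sum hq0 hq1 j).tsum_eq
    rw [hθeq, log_theta_eq hq0 hq1]
    have hrw : (fun j : ℕ => (-1 : ℝ) ^ (j + 1) *
          ∑' k : ℕ, q ^ ((j + 1) * (2 * k + 1)) / (2 * (k : ℝ) + 1))
        = fun j : ℕ => (-(1 : ℝ) / 2) *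
          ((-1) ^ j * (Real.log (1 + q ^ (j + 1)) - Real.log (1 - q ^ (j + 1)))) := by
      funext j
      rw [hinner j, pow_succ]
      ring
    rw [hrw, tsum_mul_left]
    -- even/odd split of the alternating series
    have hfe : (fun i : ℕ => (-1 : ℝ) ^ (2 * i) *
          (Real.log (1 + q ^ (2 * i + 1)) - Real.log (1 - q ^ (2 * i + 1))))
        = fun i : ℕ => Real.log (1 + q ^ (2 * i + 1)) - Real.log (1 - q ^ (2 * i + 1)) := by
      funext i
      rw [Even.neg_one_pow ⟨i, two_mul i⟩, one_mul]
    have hfo : (fun i : ℕ => (-1 : ℝ) ^ (2 * i + 1) *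
          (Real.log (1 + q ^ (2 * i + 1 + 1)) - Real.log (1 - q ^ (2 * i + 1 + 1))))
        = fun i : ℕ => Real.log (1 - q ^ (2 * i + 2)) - Real.log (1 + q ^ (2 * i + 2)) := by
      funext i
      have h : 2 * i + 1 + 1 = 2 * i + 2 := by omega
      rw [Odd.neg_one_pow ⟨i, rfl⟩, h]
      ring
    have he : HasSum (fun i : ℕ => (-1 : ℝ) ^ (2 * i) *
          (Real.log (1 + q ^ (2 * i + 1)) - Real.log (1 - q ^ (2 * i + 1))))
        ((∑' i : ℕ, Real.log (1 + q ^ (2 * i + 1)))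
          - ∑' i : ℕ, Real.log (1 - q ^ (2 * i + 1))) := by
      rw [hfe]
      exact (sB hq0 hq1).hasSum.sub (sO hq0 hq1).hasSum
    have ho : HasSum (fun i : ℕ => (-1 : ℝ) ^ (2 * i + 1) *
          (Real.log (1 + q ^ (2 * i + 1 + 1)) - Real.log (1 - q ^ (2 * i + 1 + 1))))
        ((∑' i : ℕ, Real.log (1 - q ^ (2 * i + 2)))
          - ∑' i : ℕ, Real.log (1 + q ^ (2 * i + 2))) := by
      rw [hfo]
      exact (sA hq0 hq1).hasSum.sub (sP hq0 hq1).hasSum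
    have hf := HasSum.even_add_odd (f := fun j : ℕ => (-1 : ℝ) ^ j *
      (Real.log (1 + q ^ (j + 1)) - Real.log (1 - q ^ (j + 1)))) he ho
    rw [hf.tsum_eq]
    have heuler := euler hq0 hq1
    have hEs := tsum_E_split hq0 hq1
    linarith
end
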